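/- arXiv:2306.15744 — 3 statements merged into one kernel-verified Lean document; each statement's English description precedes it below -/
import Mathlib

section
/- There exists a (central, non-ticketed) learning–unlearning scheme for the augmented class of point functions (point functions together with the all-zero function) with space complexity C = O(log|X| + log n), valid for all realizable datasets of size n: Learn(S) returns h ∈ ERM(S) and auxiliary information of O(log|X| + log n) bits, and for every I ⊆ [n], Unlearn(S_I, aux) returns the same hypothesis that Learn returns on S ∖ S_I. -/
/-- Empirical loss of hypothesis `h` on dataset `S` (sum of 0-1 losses). -/
def empLoss {X : Type} (h : X → Bool) (S : List (X × Bool)) : ℕ :=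
  (S.map fun z => if h z.1 = z.2 then 0 else 1).sum

/-- A dataset is `H`-realizable if some hypothesis in `H` has zero empirical loss on it. -/
def IsRealizable {X : Type} (H : Set (X → Bool)) (S : List (X × Bool)) : Prop :=
  ∃ h ∈ H, empLoss h S = 0

/-- The set of empirical risk minimizers in `H` on the dataset `S`. -/
def ERM {X : Type} (H : Set (X → Bool)) (S : List (X × Bool)) : Set (X → Bool) :=
  {h | h ∈ H ∧ ∀ g ∈ H, empLoss h S ≤ empLoss g S}

/-- The surviving dataset `S ∖ S_I`: the examples of `S` at indices outside `I`,
kept in their original order. -/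
def surviving {Z : Type} (S : List Z) (I : Finset (Fin S.length)) : List Z :=
  ((List.finRange S.length).filter fun i => decide (i ∉ I)).map S.get

/-- The unlearning request `S_I`: the examples of `S` at indices in `I`,
in their original order. -/
def removedList {Z : Type} (S : List Z) (I : Finset (Fin S.length)) : List Z :=
  ((List.finRange S.length).filter fun i => decide (i ∈ I)).map S.get

/-- The point function `h_a(x) = 1{x = a}` on the domain `Fin N` (representing `{1, …, N}`). -/
def pointFn {N : ℕ} (a : Fin N) : Fin N → Bool := fun x => decide (x = a)

/-- The class of point functions over `Fin N` augmented with the all-zero function. -/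
def HptZero (N : ℕ) : Set (Fin N → Bool) := Set.range pointFn ∪ {fun _ => false}

/-! ### Auxiliary machinery for the LU scheme -/

/-- Number of positively-labeled examples in a dataset. -/
def posCount {N : ℕ} (S : List (Fin N × Bool)) : ℕ := S.countP (fun z => z.2)

/-- The domain point of the first positively-labeled example, if any. -/
def firstPos {N : ℕ} (S : List (Fin N × Bool)) : Option (Fin N) :=
  (S.find? (fun z => z.2)).map Prod.fst

/-- Hypothesis determined by an optional point. -/
def hypOf {N : ℕ} : Option (Fin N) → (Fin N → Bool)
  | some a => pointFn a
  | none => fun _ => false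

lemma empLoss_eq_zero_iff {X : Type} (h : X → Bool) (S : List (X × Bool)) :
    empLoss h S = 0 ↔ ∀ z ∈ S, h z.1 = z.2 := by
  induction S with
  | nil => simp [empLoss]
  | cons a S ih =>
    simp only [empLoss, List.map_cons, List.sum_cons] at ih ⊢
    by_cases hc : h a.1 = a.2 <;> simp [hc, ih]

lemma countP_split {α : Type} (l : List α) (p q : α → Bool) :
    (l.filter q).countP p + (l.filter (fun a => !q a)).countP p = l.countP p := by
  induction l with
  | nil => simp
  | cons a l ih =>
    by_cases hq : q a <;> by_cases hp : p a <;>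
      simp [List.filter_cons, List.countP_cons, hq, hp] <;> omega

lemma posCount_partition {N : ℕ} (S : List (Fin N × Bool)) (I : Finset (Fin S.length)) :
    posCount (surviving S I) + posCount (removedList S I) = posCount S := by
  unfold posCount surviving removedList
  rw [List.countP_map, List.countP_map]
  have h1 : (fun i : Fin S.length => decide (i ∉ I)) = fun i => !decide (i ∈ I) := by
    funext i; simp
  rw [h1, Nat.add_comm, countP_split]
  conv_rhs => rw [← List.map_get_finRange S]
  rw [List.countP_map]

lemma mem_surviving {N : ℕ} {S : List (Fin N × Bool)} {I : Finset (Fin S.length)}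
    {z : Fin N × Bool} (hz : z ∈ surviving S I) : z ∈ S := by
  unfold surviving at hz
  obtain ⟨i, _, rfl⟩ := List.mem_map.1 hz
  exact List.get_mem S i

/-- If `S` is realizable and contains a positive example `(x, true)`, then `pointFn x` has
zero loss on `S`; in particular every positive example of `S` has first component `x`. -/
lemma realizable_point {N : ℕ} {S : List (Fin N × Bool)} (hreal : IsRealizable (HptZero N) S)
    {x : Fin N} (hx : (x, true) ∈ S) : empLoss (pointFn x) S = 0 := by
  obtain ⟨h, hH, h0⟩ := hreal
  rw [empLoss_eq_zero_iff] at h0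
  rcases hH with ⟨a, rfl⟩ | hzero
  · have := h0 _ hx
    simp only [pointFn, decide_eq_true_eq] at this
    subst this
    exact by rw [empLoss_eq_zero_iff]; exact h0
  · exact absurd (h0 _ hx) (by simp [Set.mem_singleton_iff.1 hzero])

lemma firstPos_eq_none_iff {N : ℕ} (S : List (Fin N × Bool)) :
    firstPos S = none ↔ posCount S = 0 := by
  simp [firstPos, posCount, List.find?_eq_none, List.countP_eq_zero]

/-- If `firstPos S = some a` then `(a, true) ∈ S`. -/
lemma firstPos_mem {N : ℕ} {S : List (Fin N × Bool)} {a : Fin N}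
    (h : firstPos S = some a) : (a, true) ∈ S := by
  unfold firstPos at h
  obtain ⟨z, hz, rfl⟩ := Option.map_eq_some_iff.1 h
  have hmem := List.mem_of_find?_eq_some hz
  have hp := List.find?_some hz
  have : z = (z.1, true) := by rw [← hp]
  rw [this] at hmem
  exact hmem

/-- **Theorem (central LU scheme for point functions augmented with zero).** There is a
constant `c` such that for every domain size `N` and dataset size `n` there is a central
(non-ticketed) learning–unlearning scheme for the class of point functions together with
the all-zero function, valid for all realizable datasets of size (at most) `n`, whose
auxiliary information has at most `c · (log N + log n) = O(log|X| + log n)` bits. -/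
theorem augmented_point_functions_central_lu :
    ∃ c : ℕ, 0 < c ∧
      ∀ N n : ℕ, ∃ cs : ℕ,
        cs ≤ c * (Nat.clog 2 N + Nat.clog 2 n + 1) ∧
        ∃ (Learn : List (Fin N × Bool) → (Fin N → Bool) × (Fin cs → Bool))
          (Unlearn : List (Fin N × Bool) → (Fin cs → Bool) → (Fin N → Bool)),
          ∀ S : List (Fin N × Bool), S.length ≤ n → IsRealizable (HptZero N) S →
            (Learn S).1 ∈ ERM (HptZero N) S ∧
            ∀ I : Finset (Fin S.length),
              Unlearn (removedList S I) (Learn S).2 = (Learn (surviving S I)).1 := by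
  refine ⟨2, by norm_num, fun N n => ?_⟩
  set cs := Nat.clog 2 N + Nat.clog 2 n + 2 with hcs
  refine ⟨cs, by omega, ?_⟩
  -- an injective encoding of the auxiliary data into `cs` bits
  have hcard : Fintype.card (Option (Fin N) × Fin (n + 1)) ≤ Fintype.card (Fin cs → Bool) := by
    simp only [Fintype.card_prod, Fintype.card_option, Fintype.card_fin, Fintype.card_fun,
      Fintype.card_bool]
    have hN : N + 1 ≤ 2 ^ (Nat.clog 2 N + 1) := by
      have := Nat.le_pow_clog (b := 2) (by norm_num) N
      have h1 : (1 : ℕ) ≤ 2 ^ Nat.clog 2 N := Nat.one_le_two_pow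
      rw [pow_succ]; omega
    have hn : n + 1 ≤ 2 ^ (Nat.clog 2 n + 1) := by
      have := Nat.le_pow_clog (b := 2) (by norm_num) n
      have h1 : (1 : ℕ) ≤ 2 ^ Nat.clog 2 n := Nat.one_le_two_pow
      rw [pow_succ]; omega
    calc (N + 1) * (n + 1) ≤ 2 ^ (Nat.clog 2 N + 1) * 2 ^ (Nat.clog 2 n + 1) :=
          Nat.mul_le_mul hN hn
      _ = 2 ^ cs := by rw [← pow_add, hcs]; ring_nf
  obtain ⟨e⟩ := Function.Embedding.nonempty_of_card_le hcard
  classical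
  -- Learn and Unlearn
  set Learn : List (Fin N × Bool) → (Fin N → Bool) × (Fin cs → Bool) :=
    fun S => (hypOf (firstPos S),
      e (firstPos S, ⟨min (posCount S) n, by omega⟩)) with hLearn
  set Unlearn : List (Fin N × Bool) → (Fin cs → Bool) → (Fin N → Bool) :=
    fun R f =>
      let p := Function.invFun e f
      if posCount R < (p.2 : ℕ) then hypOf p.1 else fun _ => false with hUnlearn
  refine ⟨Learn, Unlearn, fun S hlen hreal => ?_⟩
  have hinv : ∀ x, Function.invFun e (e x) = x :=
    Function.leftInverse_invFun e.injective
  have hmin : min (posCount S) n = posCount S := by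
    have : posCount S ≤ S.length := List.countP_le_length
    omega
  -- Learn S has zero empirical loss
  have hloss : empLoss (Learn S).1 S = 0 := by
    cases hfp : firstPos S with
    | none =>
      rw [hLearn]; simp only [hfp, hypOf]
      rw [empLoss_eq_zero_iff]
      intro z hz
      have h0 : posCount S = 0 := (firstPos_eq_none_iff S).1 hfp
      have := List.countP_eq_zero.1 h0 z hz
      simp [this]
    | some a =>
      rw [hLearn]; simp only [hfp, hypOf]
      exact realizable_point hreal (firstPos_mem hfp)
  constructor
  · refine ⟨?_, fun g hg => by simp [hloss]⟩
    cases hfp : firstPos S with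
    | none => rw [hLearn]; simp only [hfp, hypOf]; exact Or.inr rfl
    | some a => rw [hLearn]; simp only [hfp, hypOf]; exact Or.inl ⟨a, rfl⟩
  · intro I
    have hpart := posCount_partition S I
    have hUval : Unlearn (removedList S I) (Learn S).2 =
        if posCount (removedList S I) < posCount S then hypOf (firstPos S)
        else fun _ => false := by
      rw [hUnlearn, hLearn]
      simp only [hinv, hmin]
    rw [hUval]
    by_cases hT : posCount (surviving S I) = 0
    · have hcond : ¬ posCount (removedList S I) < posCount S := by omega
      rw [if_neg hcond, hLearn]
      simp only [(firstPos_eq_none_iff _).2 hT, hypOf]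
    · have hcond : posCount (removedList S I) < posCount S := by omega
      rw [if_pos hcond, hLearn]
      -- surviving has a positive example
      -- firstPos of surviving is some b, and firstPos of S is some a, with a = b
      cases hfpT : firstPos (surviving S I) with
      | none =>
        exact absurd ((firstPos_eq_none_iff _).1 hfpT) hT
      | some b =>
        cases hfpS : firstPos S with
        | none =>
          have h0 : posCount S = 0 := (firstPos_eq_none_iff S).1 hfpS
          omega
        | some a =>
          have haS : (a, true) ∈ S := firstPos_mem hfpS
          have hbS : (b, true) ∈ S := mem_surviving (firstPos_mem hfpT)
          have hpt := realizable_point hreal haS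
          rw [empLoss_eq_zero_iff] at hpt
          have := hpt _ hbS
          simp only [pointFn, decide_eq_true_eq] at this
          simp only [hfpT, this]
end

section
/- There exists a (central, non-ticketed) learning–unlearning scheme for the class H_pt of point functions with space complexity C = O(log|X|), valid for all H_pt-realizable datasets without repeated examples: Learn(S) returns h ∈ ERM_{H_pt}(S) and auxiliary information of O(log|X|) bits, and for every I ⊆ [n], Unlearn(S_I, aux) returns the same hypothesis that Learn returns on S ∖ S_I. -/
/-- The class of point functions over `Fin N`. -/
def Hpt (N : ℕ) : Set (Fin N → Bool) := Set.range pointFn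

/- ### auxiliary development -/
namespace LUaux

variable {N : ℕ}

/-- minimum of a finset as an option -/
def minOpt (T : Finset (Fin N)) : Option (Fin N) :=
  if h : T.Nonempty then some (T.min' h) else none

/-- combine two optional minima -/
def omin : Option (Fin N) → Option (Fin N) → Option (Fin N)
  | none, o => o
  | some a, none => some a
  | some a, some b => some (min a b)

lemma minOpt_union (A B : Finset (Fin N)) :
    minOpt (A ∪ B) = omin (minOpt A) (minOpt B) := by
  rcases A.eq_empty_or_nonempty with hA | hA
  · subst hA
    simp [minOpt, omin]
  · rcases B.eq_empty_or_nonempty with hB | hB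
    · subst hB
      simp [minOpt, omin, hA]
    · have hAB : (A ∪ B).Nonempty := hA.mono Finset.subset_union_left
      simp only [minOpt, omin, dif_pos hA, dif_pos hB, dif_pos hAB]
      congr 1
      refine le_antisymm (le_inf ?_ ?_) ?_
      · exact Finset.min'_le _ _ (Finset.mem_union_left _ (A.min'_mem hA))
      · exact Finset.min'_le _ _ (Finset.mem_union_right _ (B.min'_mem hB))
      · rcases Finset.mem_union.mp ((A ∪ B).min'_mem hAB) with h | h
        · exact le_trans inf_le_left (A.min'_le _ h)
        · exact le_trans inf_le_right (B.min'_le _ h)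

/-- first positive point, if any -/
def posPt (S : List (Fin N × Bool)) : Option (Fin N) :=
  (S.find? fun z => z.2).map Prod.fst

/-- the set of x's appearing with a negative label -/
def negSet (S : List (Fin N × Bool)) : Finset (Fin N) :=
  (S.filterMap fun z => if z.2 then none else some z.1).toFinset

lemma mem_negSet {S : List (Fin N × Bool)} {x : Fin N} :
    x ∈ negSet S ↔ (x, false) ∈ S := by
  simp only [negSet, List.mem_toFinset, List.mem_filterMap]
  constructor
  · rintro ⟨⟨a, b⟩, hmem, hb⟩
    cases b
    · simp at hb; subst hb; exact hmem
    · simp at hb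
  · intro h; exact ⟨(x, false), h, by simp⟩

/-- hypothesis used in the all-negative case -/
def negHyp (o : Option (Fin N)) : Fin N → Bool := o.elim (fun _ => false) pointFn

/-- canonical learned hypothesis -/
def hypOf (S : List (Fin N × Bool)) : Fin N → Bool :=
  (posPt S).elim (negHyp (minOpt (negSet S)ᶜ)) pointFn

/-- unlearning function from removed list and decoded auxiliary data -/
def unlearnFn (R : List (Fin N × Bool)) (p mo : Option (Fin N)) : Fin N → Bool :=
  p.elim (negHyp (omin mo (minOpt (negSet R))))
    (fun a => if (a, true) ∈ R then negHyp (omin mo (minOpt (negSet R))) else pointFn a)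

lemma empLoss_eq_zero_iff {X : Type} (h : X → Bool) (S : List (X × Bool)) :
    empLoss h S = 0 ↔ ∀ z ∈ S, h z.1 = z.2 := by
  rw [empLoss, List.sum_eq_zero_iff]
  constructor
  · intro H z hz
    have := H _ (List.mem_map_of_mem hz)
    by_contra hne
    simp [hne] at this
  · intro H n hn
    rcases List.mem_map.mp hn with ⟨z, hz, rfl⟩
    simp [H z hz]

section Consistent

variable {S : List (Fin N × Bool)} {a0 : Fin N}

lemma posPt_eq (hc : ∀ z ∈ S, z.2 = decide (z.1 = a0)) :
    posPt S = if (a0, true) ∈ S then some a0 else none := by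
  by_cases hmem : (a0, true) ∈ S
  · simp only [hmem, if_true, posPt]
    have hsome : (S.find? fun z => z.2).isSome := by
      rw [List.find?_isSome]
      exact ⟨(a0, true), hmem, rfl⟩
    rcases Option.isSome_iff_exists.mp hsome with ⟨z, hz⟩
    have hz2 : z.2 = true := List.find?_some hz
    have hzS : z ∈ S := List.mem_of_find?_eq_some hz
    have := hc z hzS
    rw [hz2] at this
    have hz1 : z.1 = a0 := by simpa using this.symm
    rw [hz, Option.map_some]
    simp [hz1]
  · simp only [hmem, if_false, posPt, Option.map_eq_none_iff]
    rw [List.find?_eq_none]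
    intro z hzS hz2
    have := hc z hzS
    rw [hz2] at this
    have hz1 : z.1 = a0 := by simpa using this.symm
    apply hmem
    have : z = (a0, true) := Prod.ext hz1 hz2
    rwa [this] at hzS

lemma a0_not_mem_negSet (hc : ∀ z ∈ S, z.2 = decide (z.1 = a0)) :
    a0 ∉ negSet S := by
  intro h
  have := hc (a0, false) (mem_negSet.mp h)
  simp at this

end Consistent

section Split

variable {Z : Type} {S : List Z} {I : Finset (Fin S.length)}

lemma mem_removedList {z : Z} :
    z ∈ removedList S I ↔ ∃ i, i ∈ I ∧ S.get i = z := by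
  simp [removedList, List.mem_filter]

lemma mem_surviving {z : Z} :
    z ∈ surviving S I ↔ ∃ i, i ∉ I ∧ S.get i = z := by
  simp [surviving, List.mem_filter]

lemma mem_split (hnd : S.Nodup) {z : Z} :
    z ∈ surviving S I ↔ z ∈ S ∧ z ∉ removedList S I := by
  have hinj : Function.Injective S.get := List.nodup_iff_injective_get.mp hnd
  constructor
  · intro h
    rcases mem_surviving.mp h with ⟨i, hiI, hi⟩
    refine ⟨hi ▸ S.get_mem i, ?_⟩
    intro hr
    rcases mem_removedList.mp hr with ⟨j, hjI, hj⟩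
    have : j = i := hinj (hj.trans hi.symm)
    exact hiI (this ▸ hjI)
  · rintro ⟨hS, hr⟩
    rcases List.mem_iff_get.mp hS with ⟨i, hi⟩
    refine mem_surviving.mpr ⟨i, ?_, hi⟩
    intro hiI
    exact hr (mem_removedList.mpr ⟨i, hiI, hi⟩)

end Split

section Main

variable {S : List (Fin N × Bool)} {a0 : Fin N} {I : Finset (Fin S.length)}

lemma negSet_surviving (hnd : S.Nodup) :
    negSet (surviving S I) = negSet S \ negSet (removedList S I) := by
  ext x
  simp only [Finset.mem_sdiff, mem_negSet]
  rw [mem_split hnd]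

lemma compl_negSet_surviving (hnd : S.Nodup) :
    (negSet (surviving S I))ᶜ = (negSet S)ᶜ ∪ negSet (removedList S I) := by
  rw [negSet_surviving hnd]
  ext x
  simp only [Finset.mem_compl, Finset.mem_sdiff, Finset.mem_union]
  tauto

lemma key_min (hnd : S.Nodup) :
    minOpt (negSet (surviving S I))ᶜ
      = omin (minOpt (negSet S)ᶜ) (minOpt (negSet (removedList S I))) := by
  rw [compl_negSet_surviving hnd, minOpt_union]

lemma surv_consistent (hnd : S.Nodup) (hc : ∀ z ∈ S, z.2 = decide (z.1 = a0)) :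
    ∀ z ∈ surviving S I, z.2 = decide (z.1 = a0) := by
  intro z hz
  exact hc z ((mem_split hnd).mp hz).1

lemma unlearn_correct (hnd : S.Nodup) (hc : ∀ z ∈ S, z.2 = decide (z.1 = a0)) :
    unlearnFn (removedList S I) (posPt S) (minOpt (negSet S)ᶜ)
      = hypOf (surviving S I) := by
  have hcT := surv_consistent (I := I) hnd hc
  by_cases hmem : (a0, true) ∈ S
  · rw [posPt_eq hc, if_pos hmem]
    by_cases hrem : (a0, true) ∈ removedList S I
    · have hsurv : (a0, true) ∉ surviving S I := by
        intro h
        exact ((mem_split hnd).mp h).2 hrem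
      rw [hypOf, posPt_eq hcT, if_neg hsurv]
      simp only [unlearnFn, Option.elim, if_pos hrem]
      rw [key_min hnd]
    · have hsurv : (a0, true) ∈ surviving S I := (mem_split hnd).mpr ⟨hmem, hrem⟩
      rw [hypOf, posPt_eq hcT, if_pos hsurv]
      simp only [unlearnFn, Option.elim, if_neg hrem]
  · rw [posPt_eq hc, if_neg hmem]
    have hsurv : (a0, true) ∉ surviving S I := by
      intro h
      exact hmem ((mem_split hnd).mp h).1
    rw [hypOf, posPt_eq hcT, if_neg hsurv]
    simp only [unlearnFn, Option.elim]
    rw [key_min hnd]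

lemma realizable_consistent (hre : IsRealizable (Hpt N) S) :
    ∃ a0 : Fin N, ∀ z ∈ S, z.2 = decide (z.1 = a0) := by
  rcases hre with ⟨h, ⟨a0, rfl⟩, hloss⟩
  refine ⟨a0, fun z hz => ?_⟩
  have := (empLoss_eq_zero_iff _ _).mp hloss z hz
  rw [← this]
  rfl

lemma hypOf_mem_ERM (hre : IsRealizable (Hpt N) S) :
    hypOf S ∈ ERM (Hpt N) S := by
  rcases realizable_consistent hre with ⟨a0, hc⟩
  suffices hzero : hypOf S ∈ Hpt N ∧ empLoss (hypOf S) S = 0 by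
    exact ⟨hzero.1, fun g _ => by rw [hzero.2]; exact Nat.zero_le _⟩
  by_cases hmem : (a0, true) ∈ S
  · rw [hypOf, posPt_eq hc, if_pos hmem]
    refine ⟨⟨a0, rfl⟩, (empLoss_eq_zero_iff _ _).mpr fun z hz => (hc z hz).symm⟩
  · rw [hypOf, posPt_eq hc, if_neg hmem]
    have hne : ((negSet S)ᶜ : Finset (Fin N)).Nonempty :=
      ⟨a0, Finset.mem_compl.mpr (a0_not_mem_negSet hc)⟩
    have hm : minOpt (negSet S)ᶜ = some ((negSet S)ᶜ.min' hne) := by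
      simp [minOpt, hne]
    set m := (negSet S)ᶜ.min' hne with hmdef
    rw [hm]
    simp only [Option.elim, negHyp]
    refine ⟨⟨m, rfl⟩, (empLoss_eq_zero_iff _ _).mpr fun z hz => ?_⟩
    have hz2 : z.2 = false := by
      cases hz2 : z.2
      · rfl
      · exfalso
        have := hc z hz
        rw [hz2] at this
        have hz1 : z.1 = a0 := by simpa using this.symm
        apply hmem
        have : z = (a0, true) := Prod.ext hz1 hz2
        rwa [this] at hz
    have hzneg : z.1 ∈ negSet S := by
      rw [mem_negSet]
      have : z = (z.1, false) := Prod.ext rfl hz2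
      rwa [← this]
    have hmc : m ∈ (negSet S)ᶜ := Finset.min'_mem _ hne
    have hne' : z.1 ≠ m := by
      intro h
      exact (Finset.mem_compl.mp hmc) (h ▸ hzneg)
    rw [hz2]
    simp [pointFn, hne']

end Main

end LUaux


/-- **Theorem (central LU scheme for point functions, datasets without repetitions).**
There is a constant `c` such that for every domain size `N` there is a central
(non-ticketed) learning–unlearning scheme for the class of point functions, valid for all
realizable datasets without repeated examples, whose auxiliary information has at most
`c · (log N + 1) = O(log|X|)` bits. -/
theorem point_functions_central_lu_no_repetitions :
    ∃ c : ℕ, 0 < c ∧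
      ∀ N : ℕ, ∃ cs : ℕ,
        cs ≤ c * (Nat.clog 2 N + 1) ∧
        ∃ (Learn : List (Fin N × Bool) → (Fin N → Bool) × (Fin cs → Bool))
          (Unlearn : List (Fin N × Bool) → (Fin cs → Bool) → (Fin N → Bool)),
          ∀ S : List (Fin N × Bool), S.Nodup → IsRealizable (Hpt N) S →
            (Learn S).1 ∈ ERM (Hpt N) S ∧
            ∀ I : Finset (Fin S.length),
              Unlearn (removedList S I) (Learn S).2 = (Learn (surviving S I)).1 := by
  refine ⟨2, by norm_num, fun N => ?_⟩
  set k := Nat.clog 2 N with hk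
  refine ⟨2 * k + 2, by omega, ?_⟩
  -- the message type
  have hcard : Fintype.card (Option (Fin N) × Option (Fin N))
      ≤ Fintype.card (Fin (2 * k + 2) → Bool) := by
    rw [Fintype.card_prod, Fintype.card_option, Fintype.card_fin, Fintype.card_fun,
      Fintype.card_bool, Fintype.card_fin]
    have h1 : N ≤ 2 ^ k := Nat.le_pow_clog (by norm_num) N
    have h2 : 1 ≤ 2 ^ k := Nat.one_le_two_pow
    have h3 : N + 1 ≤ 2 ^ (k + 1) := by
      rw [pow_succ]
      omega
    calc (N + 1) * (N + 1) ≤ 2 ^ (k + 1) * 2 ^ (k + 1) := Nat.mul_le_mul h3 h3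
      _ = 2 ^ (2 * k + 2) := by rw [← pow_add]; ring_nf
  obtain ⟨ι⟩ := Function.Embedding.nonempty_of_card_le hcard
  let dec : (Fin (2 * k + 2) → Bool) → Option (Fin N) × Option (Fin N) :=
    Function.invFun ι
  have hdec : ∀ m, dec (ι m) = m := Function.leftInverse_invFun ι.injective
  refine ⟨fun S => (LUaux.hypOf S, ι (LUaux.posPt S, LUaux.minOpt (LUaux.negSet S)ᶜ)),
    fun R b => LUaux.unlearnFn R (dec b).1 (dec b).2, fun S hnd hre => ?_⟩
  refine ⟨LUaux.hypOf_mem_ERM hre, fun I => ?_⟩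
  rcases LUaux.realizable_consistent hre with ⟨a0, hc⟩
  simp only [hdec]
  exact LUaux.unlearn_correct hnd hc
end

section
/- Any (central, non-ticketed) learning–unlearning scheme for the class H_thresh of one-dimensional threshold functions that is required to be valid for all (including non-realizable) datasets must have space complexity Ω(min{n, |X|}): for every m ∈ ℕ, if |X| ≥ 4m + 4 and the scheme is valid for all datasets of size 4m over X, then its auxiliary information must contain at least m bits. -/
/-- The threshold function `h_{>a}(x) = 1{x > a}` on the domain `{1, …, N}`, represented on
`Fin N` (where `x : Fin N` stands for the domain point `x + 1`): `h_{>a} x = 1{a ≤ x}`. -/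
def thrFn (N : ℕ) (a : ℕ) : Fin N → Bool := fun x => decide (a ≤ (x : ℕ))

/-- The class of one-dimensional threshold functions over `{1, …, N}`,
indexed by `a ∈ {0, 1, …, N}`. -/
def Hthr (N : ℕ) : Set (Fin N → Bool) := {h | ∃ a ≤ N, h = thrFn N a}

lemma sum_map_filter {α : Type} (p : α → Bool) (g : α → ℕ) (l : List α) :
    ((l.filter p).map g).sum = (l.map fun a => if p a then g a else 0).sum := by
  induction l with
  | nil => simp
  | cons a l ih => by_cases h : p a <;> simp [List.filter_cons, h, ih]

lemma sum_map_finRange (n : ℕ) (f : Fin n → ℕ) :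
    ((List.finRange n).map f).sum = ∑ i : Fin n, f i := by
  rw [← List.ofFn_eq_map, List.sum_ofFn]

lemma filterMap_congr {Z : Type} {n₁ n₂ : ℕ} (h : n₁ = n₂)
    (g : Fin n₁ → Z) (q : Fin n₁ → Bool) (f : Fin n₂ → Z) (p : Fin n₂ → Bool)
    (hg : ∀ i, q i = true → g i = f (Fin.cast h i)) (hq : ∀ i, q i = p (Fin.cast h i)) :
    ((List.finRange n₁).filter q).map g = ((List.finRange n₂).filter p).map f := by
  subst h
  have hq' : q = p := funext fun i => by simpa using hq i
  subst hq'
  exact List.map_congr_left fun i hi => by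
    simpa using hg i (List.of_mem_filter hi)

lemma removedList_ofFn {Z : Type} {n : ℕ} (f : Fin n → Z) (P : ℕ → Bool) :
    removedList (List.ofFn f) (Finset.univ.filter fun i => P i.1 = true) =
      ((List.finRange n).filter fun i => P i.1).map f := by
  unfold removedList
  exact filterMap_congr (List.length_ofFn (f := f)) _ _ f (fun i => P i.1)
    (fun i _ => List.get_ofFn f i) (fun i => by simp)

lemma empLoss_surviving_ofFn {N n : ℕ} (h : Fin N → Bool) (f : Fin n → Fin N × Bool)
    (P : ℕ → Bool) :
    empLoss h (surviving (List.ofFn f) (Finset.univ.filter fun i => P i.1 = true)) =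
      ∑ i : Fin n, if P i.1 then 0 else (if h (f i).1 = (f i).2 then 0 else 1) := by
  unfold surviving empLoss
  rw [List.map_map]
  rw [filterMap_congr (List.length_ofFn (f := f)) _ _
      (fun i => if h (f i).1 = (f i).2 then 0 else 1) (fun i => !P i.1)
      (fun i _ => by simp only [Function.comp_apply, List.get_ofFn]) (fun i => by simp)]
  rw [sum_map_filter, sum_map_finRange]
  refine Finset.sum_congr rfl fun i _ => ?_
  by_cases hp : P i.1 <;> simp [hp]

lemma surviving_length_le {Z : Type} (S : List Z) (I : Finset (Fin S.length)) :
    (surviving S I).length ≤ S.length := by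
  unfold surviving
  rw [List.length_map]
  exact le_trans (List.length_filter_le _ _) (by simp)

def lab (β : ℕ → Bool) (x : ℕ) : Bool :=
  if x % 4 = 0 then false else if x % 4 = 3 then true else β (x / 4)

def remP (β β' : ℕ → Bool) (j : ℕ) (x : ℕ) : Bool :=
  !(decide (x / 4 = j ∨ (β (x / 4) ≠ β' (x / 4) ∧ (x % 4 = 1 ∨ x % 4 = 2))))

lemma pointwise (m j a : ℕ) (β β' : ℕ → Bool) (hj : j < m)
    (hb : β j = true) (hb' : β' j = false) (x : ℕ) (hx : x < 4 * m) :
    ((if remP β β' j x = true then 0 else if decide (4*j+1 ≤ x) = lab β x then 0 else 1) +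
     (if remP β β' j x = true then 0 else if decide (4*j+3 ≤ x) = lab β' x then 0 else 1)) +
    ((if x = 4*j+1 then 1 else 0) + (if x = 4*j+2 then 1 else 0)) ≤
    ((if remP β β' j x = true then 0 else if decide (a ≤ x) = lab β x then 0 else 1) +
     (if remP β β' j x = true then 0 else if decide (a ≤ x) = lab β' x then 0 else 1)) := by
  by_cases hrem : remP β β' j x = true
  · have h' : ¬ x / 4 = j ∧ (β (x / 4) = β' (x / 4) ∨ ¬ x % 4 = 1 ∧ ¬ x % 4 = 2) := by
      simpa [remP] using hrem
    have hxj := h'.1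
    simp only [if_pos hrem]
    split_ifs <;> omega
  · have hkeep : x / 4 = j ∨ (β (x / 4) ≠ β' (x / 4) ∧ (x % 4 = 1 ∨ x % 4 = 2)) := by
      simp only [remP, Bool.not_eq_true, Bool.not_eq_false', decide_eq_true_eq] at hrem
      exact hrem
    simp only [if_neg hrem]
    have hr : x % 4 = 0 ∨ x % 4 = 1 ∨ x % 4 = 2 ∨ x % 4 = 3 := by omega
    rcases hr with hr | hr | hr | hr
    · have hxj : x / 4 = j := by rcases hkeep with h | ⟨-, h⟩ <;> omega
      simp only [lab, hr]
      norm_num <;> split_ifs <;> omega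
    · by_cases hxj : x / 4 = j
      · have hβ : β (x / 4) = true := by rw [hxj]; exact hb
        have hβ2 : β' (x / 4) = false := by rw [hxj]; exact hb'
        simp only [lab, hr, hβ, hβ2]
        norm_num <;> split_ifs <;> omega
      · have hne : β (x / 4) ≠ β' (x / 4) := by
          rcases hkeep with h | ⟨h, -⟩
          · exact absurd h hxj
          · exact h
        have hβ'' : β' (x / 4) = !β (x / 4) := by
          cases h1 : β (x / 4) <;> cases h2 : β' (x / 4) <;> simp_all
        cases hβ : β (x / 4)
        · have h2 : β' (x / 4) = true := by rw [hβ] at hβ''; simpa using hβ''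
          simp only [lab, hr, hβ, h2]
          norm_num <;> split_ifs <;> omega
        · have h2 : β' (x / 4) = false := by rw [hβ] at hβ''; simpa using hβ''
          simp only [lab, hr, hβ, h2]
          norm_num <;> split_ifs <;> omega
    · by_cases hxj : x / 4 = j
      · have hβ : β (x / 4) = true := by rw [hxj]; exact hb
        have hβ2 : β' (x / 4) = false := by rw [hxj]; exact hb'
        simp only [lab, hr, hβ, hβ2]
        norm_num <;> split_ifs <;> omega
      · have hne : β (x / 4) ≠ β' (x / 4) := by
          rcases hkeep with h | ⟨h, -⟩
          · exact absurd h hxj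
          · exact h
        have hβ'' : β' (x / 4) = !β (x / 4) := by
          cases h1 : β (x / 4) <;> cases h2 : β' (x / 4) <;> simp_all
        cases hβ : β (x / 4)
        · have h2 : β' (x / 4) = true := by rw [hβ] at hβ''; simpa using hβ''
          simp only [lab, hr, hβ, h2]
          norm_num <;> split_ifs <;> omega
        · have h2 : β' (x / 4) = false := by rw [hβ] at hβ''; simpa using hβ''
          simp only [lab, hr, hβ, h2]
          norm_num <;> split_ifs <;> omega
    · have hxj : x / 4 = j := by rcases hkeep with h | ⟨-, h⟩ <;> omega
      simp only [lab, hr]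
      norm_num <;> split_ifs <;> omega

lemma lab_eq_of_rem (β β' : ℕ → Bool) (j x : ℕ) (h : remP β β' j x = true) :
    lab β x = lab β' x := by
  have h' : ¬ x / 4 = j ∧ (β (x / 4) = β' (x / 4) ∨ ¬ x % 4 = 1 ∧ ¬ x % 4 = 2) := by
    simpa [remP] using h
  unfold lab
  split_ifs with h0 h3
  · rfl
  · rfl
  · rcases h'.2 with heq | hno
    · rw [heq]
    · omega

def Fex (N m : ℕ) (hle : 4 * m ≤ N) (β : ℕ → Bool) (i : Fin (4 * m)) : Fin N × Bool :=
  (⟨i.1, lt_of_lt_of_le i.2 hle⟩, lab β i.1)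

lemma core (m N cs : ℕ) (hle : 4 * m ≤ N) (hN : 4 * m + 4 ≤ N)
    (Learn : List (Fin N × Bool) → (Fin N → Bool) × (Fin cs → Bool))
    (Unlearn : List (Fin N × Bool) → (Fin cs → Bool) → (Fin N → Bool))
    (hval : ∀ S : List (Fin N × Bool), S.length ≤ 4 * m →
      (Learn S).1 ∈ ERM (Hthr N) S ∧
      ∀ I : Finset (Fin S.length),
        Unlearn (removedList S I) (Learn S).2 = (Learn (surviving S I)).1)
    (β β' : ℕ → Bool) (j : ℕ) (hj : j < m) (hb : β j = true) (hb' : β' j = false)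
    (haux : (Learn (List.ofFn (Fex N m hle β))).2 = (Learn (List.ofFn (Fex N m hle β'))).2) :
    False := by
  have hv₁ := hval (List.ofFn (Fex N m hle β)) (by simp)
  have hv₂ := hval (List.ofFn (Fex N m hle β')) (by simp)
  have hrem : removedList (List.ofFn (Fex N m hle β))
        (Finset.univ.filter fun i => remP β β' j i.1 = true) =
      removedList (List.ofFn (Fex N m hle β'))
        (Finset.univ.filter fun i => remP β β' j i.1 = true) := by
    rw [removedList_ofFn, removedList_ofFn]
    refine List.map_congr_left fun i hi => ?_
    have hp : remP β β' j i.1 = true := by simpa using (List.mem_filter.mp hi).2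
    unfold Fex
    exact Prod.ext rfl (lab_eq_of_rem β β' j i.1 hp)
  have heq : (Learn (surviving (List.ofFn (Fex N m hle β))
        (Finset.univ.filter fun i => remP β β' j i.1 = true))).1 =
      (Learn (surviving (List.ofFn (Fex N m hle β'))
        (Finset.univ.filter fun i => remP β β' j i.1 = true))).1 := by
    rw [← hv₁.2 _, ← hv₂.2 _, hrem, haux]
  have hlen₁ : (surviving (List.ofFn (Fex N m hle β))
      (Finset.univ.filter fun i => remP β β' j i.1 = true)).length ≤ 4 * m :=
    le_trans (surviving_length_le _ _) (by simp)
  have hlen₂ : (surviving (List.ofFn (Fex N m hle β'))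
      (Finset.univ.filter fun i => remP β β' j i.1 = true)).length ≤ 4 * m :=
    le_trans (surviving_length_le _ _) (by simp)
  obtain ⟨⟨a, haN, hfa⟩, hmin₁⟩ := (hval _ hlen₁).1
  have hmin₂ := (hval _ hlen₂).1.2
  rw [← heq, hfa] at hmin₂
  rw [hfa] at hmin₁
  have k₁ := hmin₁ (thrFn N (4 * j + 1)) ⟨4 * j + 1, by omega, rfl⟩
  have k₂ := hmin₂ (thrFn N (4 * j + 3)) ⟨4 * j + 3, by omega, rfl⟩
  rw [empLoss_surviving_ofFn, empLoss_surviving_ofFn] at k₁ k₂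
  have h2eq : ∑ i : Fin (4 * m),
      ((if (i : ℕ) = 4 * j + 1 then 1 else 0) + (if (i : ℕ) = 4 * j + 2 then 1 else 0)) = 2 := by
    rw [Finset.sum_add_distrib]
    have t1 : ∑ i : Fin (4 * m), (if (i : ℕ) = 4 * j + 1 then (1:ℕ) else 0) = 1 :=
      calc ∑ i : Fin (4 * m), (if (i : ℕ) = 4 * j + 1 then (1:ℕ) else 0)
          = ∑ i : Fin (4 * m), (if i = (⟨4 * j + 1, by omega⟩ : Fin (4 * m)) then (1:ℕ) else 0) :=
            Finset.sum_congr rfl fun i _ => by simp [Fin.ext_iff]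
        _ = 1 := by simp
    have t2 : ∑ i : Fin (4 * m), (if (i : ℕ) = 4 * j + 2 then (1:ℕ) else 0) = 1 :=
      calc ∑ i : Fin (4 * m), (if (i : ℕ) = 4 * j + 2 then (1:ℕ) else 0)
          = ∑ i : Fin (4 * m), (if i = (⟨4 * j + 2, by omega⟩ : Fin (4 * m)) then (1:ℕ) else 0) :=
            Finset.sum_congr rfl fun i _ => by simp [Fin.ext_iff]
        _ = 1 := by simp
    rw [t1, t2]
  have E3 : (∑ i : Fin (4 * m), if remP β β' j i.1 = true then 0
        else if thrFn N (4 * j + 1) (Fex N m hle β i).1 = (Fex N m hle β i).2 then 0 else 1) +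
      (∑ i : Fin (4 * m), if remP β β' j i.1 = true then 0
        else if thrFn N (4 * j + 3) (Fex N m hle β' i).1 = (Fex N m hle β' i).2 then 0 else 1) +
      2 ≤
      (∑ i : Fin (4 * m), if remP β β' j i.1 = true then 0
        else if thrFn N a (Fex N m hle β i).1 = (Fex N m hle β i).2 then 0 else 1) +
      (∑ i : Fin (4 * m), if remP β β' j i.1 = true then 0
        else if thrFn N a (Fex N m hle β' i).1 = (Fex N m hle β' i).2 then 0 else 1) := by
    rw [← h2eq, ← Finset.sum_add_distrib, ← Finset.sum_add_distrib, ← Finset.sum_add_distrib]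
    refine Finset.sum_le_sum fun i _ => ?_
    have hp := pointwise m j a β β' hj hb hb' i.1 i.2
    simp only [thrFn, Fex]
    exact hp
  omega

/-- **Theorem (agnostic central lower bound for 1D thresholds).** Any central
(non-ticketed) learning–unlearning scheme for the class of 1D thresholds that is valid for
all — including non-realizable — datasets of size (at most) `4m`, over a domain of size
`N ≥ 4m + 4`, must have auxiliary information of at least `m` bits. -/
theorem thresholds_agnostic_central_lb (m N cs : ℕ) (hN : 4 * m + 4 ≤ N)
    (hscheme :
      ∃ (Learn : List (Fin N × Bool) → (Fin N → Bool) × (Fin cs → Bool))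
        (Unlearn : List (Fin N × Bool) → (Fin cs → Bool) → (Fin N → Bool)),
        ∀ S : List (Fin N × Bool), S.length ≤ 4 * m →
          (Learn S).1 ∈ ERM (Hthr N) S ∧
          ∀ I : Finset (Fin S.length),
            Unlearn (removedList S I) (Learn S).2 = (Learn (surviving S I)).1) :
    m ≤ cs := by
  obtain ⟨Learn, Unlearn, hval⟩ := hscheme
  have hle : 4 * m ≤ N := by omega
  have hinj : Function.Injective
      (fun b : Fin m → Bool =>
        (Learn (List.ofFn (Fex N m hle fun x => if h : x < m then b ⟨x, h⟩ else false))).2) := by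
    intro b b'' hbb
    by_contra hne
    obtain ⟨j, hj⟩ := Function.ne_iff.mp hne
    simp only at hbb
    have e1 : (fun x => if h : x < m then b ⟨x, h⟩ else false) (j : ℕ) = b j := by
      simp [j.2]
    have e2 : (fun x => if h : x < m then b'' ⟨x, h⟩ else false) (j : ℕ) = b'' j := by
      simp [j.2]
    cases hbj : b j
    · have hbj' : b'' j = true := by
        cases h : b'' j
        · exact absurd (hbj.trans h.symm) hj
        · rfl
      exact core m N cs hle hN Learn Unlearn hval
        (fun x => if h : x < m then b'' ⟨x, h⟩ else false)
        (fun x => if h : x < m then b ⟨x, h⟩ else false)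
        (j : ℕ) j.2 (e2.trans hbj') (e1.trans hbj) hbb.symm
    · have hbj' : b'' j = false := by
        cases h : b'' j
        · rfl
        · exact absurd (hbj.trans h.symm) hj
      exact core m N cs hle hN Learn Unlearn hval
        (fun x => if h : x < m then b ⟨x, h⟩ else false)
        (fun x => if h : x < m then b'' ⟨x, h⟩ else false)
        (j : ℕ) j.2 (e1.trans hbj) (e2.trans hbj') hbb
  have hcard := Fintype.card_le_of_injective _ hinj
  simp only [Fintype.card_fun, Fintype.card_bool, Fintype.card_fin] at hcard
  exact (Nat.pow_le_pow_iff_right (by norm_num : (1:ℕ) < 2)).mp hcard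
end
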